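/- Let Q be an N×N symmetric positive semidefinite matrix with trace at most 1, and let ζ be an N-dimensional Rademacher random vector (independent entries ±1 with probability 1/2). Then E[exp(ζᵀQζ/3)] ≤ √3. -/

import Mathlib

open Matrix Real MeasureTheory

lemma gauss_lin_integrable (a : ℝ) :
    Integrable (fun x : ℝ => Real.exp (a * x - x ^ 2 / 2)) := by
  have h : (fun x : ℝ => Real.exp (a * x - x ^ 2 / 2))
      = fun x : ℝ => Real.exp (a ^ 2 / 2) * Real.exp (-(1/2) * (x - a) ^ 2) := by
    funext x
    rw [← Real.exp_add]
    ring_nf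
  rw [h]
  exact ((integrable_exp_neg_mul_sq (by norm_num : (0:ℝ) < 1/2)).comp_sub_right a).const_mul _

lemma gauss_lin (a : ℝ) :
    ∫ x : ℝ, Real.exp (a * x - x ^ 2 / 2) = Real.sqrt (2 * π) * Real.exp (a ^ 2 / 2) := by
  have h : (fun x : ℝ => Real.exp (a * x - x ^ 2 / 2))
      = fun x : ℝ => Real.exp (a ^ 2 / 2) * Real.exp (-(1/2) * (x - a) ^ 2) := by
    funext x
    rw [← Real.exp_add]
    ring_nf
  rw [h, integral_const_mul]
  have h2 : ∫ x : ℝ, Real.exp (-(1/2) * (x - a) ^ 2)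
      = ∫ x : ℝ, Real.exp (-(1/2) * x ^ 2) := by
    have := integral_add_right_eq_self (μ := volume)
      (fun x : ℝ => Real.exp (-(1/2) * x ^ 2)) (-a)
    rw [← this]
    congr 1
  rw [h2, integral_gaussian, mul_comm]
  norm_num
  rw [mul_comm]

lemma rankone {N : ℕ} (v : Fin N → ℝ) (hv : ∑ i, v i ^ 2 ≤ 1) :
    ∑ b : Fin N → Bool, Real.exp ((∑ i, (if b i then (1:ℝ) else -1) * v i) ^ 2 / 3)
      ≤ 2 ^ N * Real.sqrt 3 := by
  set c : ℝ := Real.sqrt (2/3) with hc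
  have hc2 : c ^ 2 = 2/3 := Real.sq_sqrt (by norm_num)
  set t : (Fin N → Bool) → ℝ := fun b => ∑ i, (if b i then (1:ℝ) else -1) * v i with ht
  have hpos : (0:ℝ) < Real.sqrt (2 * π) := Real.sqrt_pos.mpr (by positivity)
  have step1 : ∀ b : Fin N → Bool, Real.exp (t b ^ 2 / 3)
      = (Real.sqrt (2 * π))⁻¹ * ∫ x : ℝ, Real.exp (c * t b * x - x ^ 2 / 2) := by
    intro b
    rw [gauss_lin (c * t b), ← mul_assoc, inv_mul_cancel₀ hpos.ne', one_mul]
    congr 1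
    rw [mul_pow, hc2]
    ring
  rw [show (∑ b : Fin N → Bool, Real.exp (t b ^ 2 / 3))
      = (Real.sqrt (2 * π))⁻¹ * ∑ b : Fin N → Bool, ∫ x : ℝ,
        Real.exp (c * t b * x - x ^ 2 / 2) by
    rw [Finset.mul_sum]; exact Finset.sum_congr rfl fun b _ => step1 b]
  rw [← integral_finset_sum _ (fun b _ => gauss_lin_integrable (c * t b))]
  have key : ∀ x : ℝ, (∑ b : Fin N → Bool, Real.exp (c * t b * x - x ^ 2 / 2))
      ≤ 2 ^ N * Real.exp (-(1/6) * x ^ 2) := by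
    intro x
    have expand : ∀ b : Fin N → Bool, Real.exp (c * t b * x - x ^ 2 / 2)
        = Real.exp (-(x ^ 2) / 2) *
          ∏ i, Real.exp (c * x * ((if b i then (1:ℝ) else -1) * v i)) := by
      intro b
      rw [← Real.exp_sum, ← Real.exp_add]
      congr 1
      have h1 : c * t b * x = ∑ i, c * x * ((if b i then (1:ℝ) else -1) * v i) := by
        rw [ht]
        simp only [Finset.mul_sum, Finset.sum_mul]
        exact Finset.sum_congr rfl fun i _ => by ring
      rw [h1]
      ring
    have hbool : (∑ b : Fin N → Bool,
          ∏ i, Real.exp (c * x * ((if b i then (1:ℝ) else -1) * v i)))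
        = ∏ i, (2 * Real.cosh (c * x * v i)) := by
      have hps := Finset.prod_univ_sum (fun _ : Fin N => (Finset.univ : Finset Bool))
        (fun i y => Real.exp (c * x * ((if y then (1:ℝ) else -1) * v i)))
      rw [Fintype.piFinset_univ] at hps
      rw [← hps]
      refine Finset.prod_congr rfl fun i _ => ?_
      rw [Fintype.sum_bool]
      norm_num
      rw [Real.cosh_eq]
      ring
    calc (∑ b : Fin N → Bool, Real.exp (c * t b * x - x ^ 2 / 2))
        = Real.exp (-(x ^ 2) / 2) * ∏ i, (2 * Real.cosh (c * x * v i)) := by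
          rw [← hbool, Finset.mul_sum]
          exact Finset.sum_congr rfl fun b _ => expand b
      _ ≤ Real.exp (-(x ^ 2) / 2) * ∏ i, (2 * Real.exp ((c * x * v i) ^ 2 / 2)) := by
          refine mul_le_mul_of_nonneg_left ?_ (Real.exp_nonneg _)
          refine Finset.prod_le_prod (fun i _ => by positivity) fun i _ => ?_
          have := Real.cosh_le_exp_half_sq (c * x * v i)
          linarith
      _ = 2 ^ N * Real.exp (-(x ^ 2) / 2 + ∑ i, (c * x * v i) ^ 2 / 2) := by
          rw [Finset.prod_mul_distrib, Finset.prod_const, Real.exp_add, ← Real.exp_sum]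
          simp only [Finset.card_univ, Fintype.card_fin]
          ring
      _ ≤ 2 ^ N * Real.exp (-(1/6) * x ^ 2) := by
          refine mul_le_mul_of_nonneg_left (Real.exp_le_exp.mpr ?_) (by positivity)
          have hs : ∑ i, (c * x * v i) ^ 2 / 2 = (x ^ 2 / 3) * ∑ i, v i ^ 2 := by
            rw [Finset.mul_sum]
            refine Finset.sum_congr rfl fun i _ => ?_
            rw [mul_pow, mul_pow, hc2]
            ring
          rw [hs]
          nlinarith [sq_nonneg x, mul_le_mul_of_nonneg_left hv
            (by positivity : (0:ℝ) ≤ x ^ 2 / 3)]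
  have hint : ∫ x : ℝ, (2:ℝ) ^ N * Real.exp (-(1/6) * x ^ 2)
      = 2 ^ N * Real.sqrt (6 * π) := by
    rw [integral_const_mul, integral_gaussian]
    congr 2
    ring
  have hmono : (∫ x : ℝ, ∑ b : Fin N → Bool, Real.exp (c * t b * x - x ^ 2 / 2))
      ≤ ∫ x : ℝ, (2:ℝ) ^ N * Real.exp (-(1/6) * x ^ 2) := by
    exact integral_mono (integrable_finset_sum _ fun b _ => gauss_lin_integrable _)
      ((integrable_exp_neg_mul_sq (by norm_num : (0:ℝ) < 1/6)).const_mul _) key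
  calc (Real.sqrt (2 * π))⁻¹ * ∫ x : ℝ, ∑ b : Fin N → Bool,
        Real.exp (c * t b * x - x ^ 2 / 2)
      ≤ (Real.sqrt (2 * π))⁻¹ * (2 ^ N * Real.sqrt (6 * π)) := by
        rw [← hint]
        exact mul_le_mul_of_nonneg_left hmono (by positivity)
    _ = 2 ^ N * Real.sqrt 3 := by
        rw [show (6:ℝ) * π = 3 * (2 * π) by ring, Real.sqrt_mul (by norm_num : (0:ℝ) ≤ 3) (2 * π)]
        rw [mul_left_comm, mul_comm (Real.sqrt 3), ← mul_assoc ((Real.sqrt (2 * π))⁻¹),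
          inv_mul_cancel₀ hpos.ne', one_mul]

/-- If `Q ⪰ 0` with `Tr Q ≤ 1` and `ζ` is an `N`-dimensional Rademacher vector, then
`E[exp(ζᵀQζ/3)] ≤ √3`. The expectation is written as a uniform average over the `2^N` sign
vectors. -/
theorem stmt9 {N : ℕ} (Q : Matrix (Fin N) (Fin N) ℝ)
    (hQ : Q.PosSemidef) (htr : Q.trace ≤ 1) :
    (∑ b : Fin N → Bool,
        Real.exp ((fun i => if b i then (1 : ℝ) else -1) ⬝ᵥ
          Q *ᵥ (fun i => if b i then (1 : ℝ) else -1) / 3)) / 2 ^ N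
      ≤ Real.sqrt 3 := by
  have hH : Q.IsHermitian := hQ.1
  set U : Matrix (Fin N) (Fin N) ℝ := (hH.eigenvectorUnitary : Matrix (Fin N) (Fin N) ℝ)
    with hU
  set lam : Fin N → ℝ := hH.eigenvalues with hlam
  have hmul : star U * U = 1 := mem_unitaryGroup_iff'.mp hH.eigenvectorUnitary.2
  have hspec : Q = U * diagonal lam * star U := by
    have := hH.spectral_theorem
    simpa using this
  have htrace : ∑ k, lam k = Q.trace := by
    rw [hspec, trace_mul_cycle, hmul, one_mul, trace_diagonal]
  have hcol : ∀ k, ∑ i, U i k ^ 2 = 1 := by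
    intro k
    have h := congrFun (congrFun hmul k) k
    simp only [Matrix.mul_apply, Matrix.star_apply, star_trivial, Matrix.one_apply_eq] at h
    rw [← h]
    exact Finset.sum_congr rfl fun i _ => (pow_two _)
  have quad : ∀ ζ : Fin N → ℝ, ζ ⬝ᵥ Q *ᵥ ζ = ∑ k, lam k * (∑ i, ζ i * U i k) ^ 2 := by
    intro ζ
    have hvm : vecMul ζ U = star U *ᵥ ζ := by
      funext k
      simp [vecMul, mulVec, dotProduct, Matrix.star_apply, mul_comm]
    conv_lhs => rw [hspec]
    rw [← Matrix.mulVec_mulVec, ← Matrix.mulVec_mulVec, Matrix.dotProduct_mulVec (v := ζ), hvm]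
    have hdiag : ∀ w : Fin N → ℝ, w ⬝ᵥ (diagonal lam *ᵥ w) = ∑ k, lam k * w k ^ 2 := by
      intro w
      simp [dotProduct, Matrix.mulVec_diagonal, pow_two]
      exact Finset.sum_congr rfl fun k _ => by ring
    have hw : star U *ᵥ ζ = fun k => ∑ i, ζ i * U i k := by
      funext k
      simp [mulVec, dotProduct, Matrix.star_apply, mul_comm]
    rw [hdiag, hw]
  have lamnn : ∀ k, 0 ≤ lam k := fun k => hQ.eigenvalues_nonneg k
  have trnn : 0 ≤ Q.trace := by
    rw [← htrace]; exact Finset.sum_nonneg fun k _ => lamnn k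
  have sqrt3 : (1:ℝ) ≤ Real.sqrt 3 := by
    nlinarith [Real.sq_sqrt (by norm_num : (0:ℝ) ≤ 3), Real.sqrt_nonneg 3]
  have jensen : ∀ b : Fin N → Bool,
      Real.exp ((fun i => if b i then (1 : ℝ) else -1) ⬝ᵥ
          Q *ᵥ (fun i => if b i then (1 : ℝ) else -1) / 3)
        ≤ (1 - Q.trace) + ∑ k, lam k *
            Real.exp ((∑ i, (if b i then (1:ℝ) else -1) * U i k) ^ 2 / 3) := by
    intro b
    set z : Fin N → ℝ := fun i => if b i then (1:ℝ) else -1 with hz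
    set W : Option (Fin N) → ℝ := fun j => j.elim (1 - Q.trace) lam with hW
    set P : Option (Fin N) → ℝ := fun j =>
      j.elim 0 (fun k => (∑ i, z i * U i k) ^ 2 / 3) with hP
    have h := convexOn_exp.map_sum_le (t := Finset.univ) (w := W) (p := P)
      (by rintro (_ | k) _
          · simp only [hW, Option.elim]; linarith
          · simpa [hW] using lamnn k)
      (by rw [Fintype.sum_option]; simp only [hW, Option.elim]; rw [htrace]; ring)
      (fun _ _ => Set.mem_univ _)
    rw [Fintype.sum_option, Fintype.sum_option] at h
    simp only [hW, hP, Option.elim, smul_eq_mul, mul_zero, zero_add, Real.exp_zero,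
      mul_one] at h
    have harg : (∑ k, lam k * ((∑ i, z i * U i k) ^ 2 / 3))
        = z ⬝ᵥ Q *ᵥ z / 3 := by
      rw [quad z, Finset.sum_div]
      exact Finset.sum_congr rfl fun k _ => by ring
    rw [harg] at h
    exact h
  have sumbound : (∑ b : Fin N → Bool,
      Real.exp ((fun i => if b i then (1 : ℝ) else -1) ⬝ᵥ
        Q *ᵥ (fun i => if b i then (1 : ℝ) else -1) / 3))
      ≤ 2 ^ N * (1 - Q.trace) + Q.trace * (2 ^ N * Real.sqrt 3) := by
    calc (∑ b : Fin N → Bool, Real.exp ((fun i => if b i then (1 : ℝ) else -1) ⬝ᵥ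
          Q *ᵥ (fun i => if b i then (1 : ℝ) else -1) / 3))
        ≤ ∑ b : Fin N → Bool, ((1 - Q.trace) + ∑ k, lam k *
            Real.exp ((∑ i, (if b i then (1:ℝ) else -1) * U i k) ^ 2 / 3)) :=
          Finset.sum_le_sum fun b _ => jensen b
      _ = 2 ^ N * (1 - Q.trace) + ∑ k, lam k * ∑ b : Fin N → Bool,
            Real.exp ((∑ i, (if b i then (1:ℝ) else -1) * U i k) ^ 2 / 3) := by
          rw [Finset.sum_add_distrib, Finset.sum_const, Finset.card_univ]
          simp only [Fintype.card_fun, Fintype.card_bool, Fintype.card_fin, nsmul_eq_mul]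
          rw [Finset.sum_comm]
          congr 1
          · push_cast; ring
          · exact Finset.sum_congr rfl fun k _ => by rw [Finset.mul_sum]
      _ ≤ 2 ^ N * (1 - Q.trace) + ∑ k, lam k * (2 ^ N * Real.sqrt 3) := by
          refine add_le_add le_rfl (Finset.sum_le_sum fun k _ => ?_)
          exact mul_le_mul_of_nonneg_left (rankone (fun i => U i k) (le_of_eq (hcol k)))
            (lamnn k)
      _ = 2 ^ N * (1 - Q.trace) + Q.trace * (2 ^ N * Real.sqrt 3) := by
          rw [← Finset.sum_mul, htrace]
  rw [div_le_iff₀ (by positivity : (0:ℝ) < 2 ^ N)]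
  calc (∑ b : Fin N → Bool, Real.exp ((fun i => if b i then (1 : ℝ) else -1) ⬝ᵥ
        Q *ᵥ (fun i => if b i then (1 : ℝ) else -1) / 3))
      ≤ 2 ^ N * (1 - Q.trace) + Q.trace * (2 ^ N * Real.sqrt 3) := sumbound
    _ ≤ Real.sqrt 3 * 2 ^ N := by
        have h2 : (0:ℝ) < 2 ^ N := by positivity
        nlinarith [mul_le_mul_of_nonneg_left (sub_nonneg.mpr htr) h2.le]
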